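/- Let ω be an infinite string over {b,c,d} with ω_{n-1} = d for some n ≥ 1. Then in the generalized Grigorchuk group 𝔾_ω, the element (a·d_k) satisfies (a·d_k)^{2^{n-k+1}} = 1 for every 0 ≤ k < n. -/
import Mathlib


/-- The automorphism `a` of the rooted binary tree `{0,1}*` flipping the first bit. -/
def aFun : List Bool → List Bool
  | [] => []
  | x :: s => (!x) :: s

lemma aFun_invol : Function.Involutive aFun := by
  intro s; cases s <;> simp [aFun]

def aPerm : Equiv.Perm (List Bool) := aFun_invol.toPerm

/-- The alphabet `{b, c, d}` of defining strings of generalized Grigorchuk groups. -/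
inductive GLetter : Type
  | b | c | d
deriving DecidableEq

/-- The action of the generator `x_n` of `𝔾_ω`: it fixes `1^m` and sends
`1^m 0 s` to itself if `ω_{n+m} = x`, and to `1^m 0 a(s)` otherwise. -/
def xFun (ω : ℕ → GLetter) (x : GLetter) : ℕ → List Bool → List Bool
  | _, [] => []
  | n, true :: s => true :: xFun ω x (n + 1) s
  | n, false :: s => false :: (if ω n = x then s else aFun s)

lemma xFun_invol (ω : ℕ → GLetter) (x : GLetter) (n : ℕ) :
    Function.Involutive (xFun ω x n) := by
  intro s
  induction s generalizing n with
  | nil => rfl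
  | cons hd t ih =>
    cases hd
    · by_cases h : ω n = x <;> simp [xFun, h, aFun_invol t]
    · simp [xFun, ih]

def xPerm (ω : ℕ → GLetter) (x : GLetter) (n : ℕ) : Equiv.Perm (List Bool) :=
  (xFun_invol ω x n).toPerm

/-- The generalized Grigorchuk group `𝔾_ω = ⟨a, b₀, c₀, d₀⟩`. -/
def Grig (ω : ℕ → GLetter) : Subgroup (Equiv.Perm (List Bool)) :=
  Subgroup.closure {aPerm, xPerm ω GLetter.b 0, xPerm ω GLetter.c 0, xPerm ω GLetter.d 0}

namespace Stmt17Aux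

variable (ω : ℕ → GLetter)

/-- Abbreviation for `a · d_k`. -/
def g (k : ℕ) : Equiv.Perm (List Bool) := aPerm * xPerm ω GLetter.d k

lemma g_apply (k : ℕ) (s : List Bool) : g ω k s = aFun (xFun ω GLetter.d k s) := rfl

lemma g_inv_apply (k : ℕ) (s : List Bool) :
    (g ω k)⁻¹ s = xFun ω GLetter.d k (aFun s) := rfl

lemma g_nil (k : ℕ) : g ω k [] = [] := rfl

lemma g_sq_cons_d {k : ℕ} (h : ω k = GLetter.d) (b : Bool) (s : List Bool) :
    g ω k (g ω k (b :: s)) = b :: xFun ω GLetter.d (k + 1) s := by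
  cases b <;> simp [g_apply, xFun, aFun, h]

lemma g_pow4 {k : ℕ} (h : ω k = GLetter.d) : (g ω k) ^ 4 = 1 := by
  ext s
  have : ((g ω k) ^ 4) s = g ω k (g ω k (g ω k (g ω k s))) := by
    simp [pow_succ, Equiv.Perm.mul_apply]
  rw [this]
  cases s with
  | nil => rfl
  | cons b t =>
      rw [g_sq_cons_d ω h, g_sq_cons_d ω h, xFun_invol]
      rfl

lemma g_sq_true {k : ℕ} (h : ω k ≠ GLetter.d) (s : List Bool) :
    g ω k (g ω k (true :: s)) = true :: g ω (k + 1) s := by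
  simp [g_apply, xFun, aFun, h]

lemma g_sq_false {k : ℕ} (h : ω k ≠ GLetter.d) (s : List Bool) :
    g ω k (g ω k (false :: s)) = false :: (g ω (k + 1))⁻¹ s := by
  simp [g_apply, g_inv_apply, xFun, aFun, h]

lemma g_sq_pow_true {k : ℕ} (h : ω k ≠ GLetter.d) (m : ℕ) (s : List Bool) :
    (((g ω k) ^ 2) ^ m) (true :: s) = true :: ((g ω (k + 1)) ^ m) s := by
  induction m generalizing s with
  | zero => rfl
  | succ m ih =>
      have h1 : (((g ω k) ^ 2) ^ (m + 1)) (true :: s)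
          = (((g ω k) ^ 2) ^ m) (g ω k (g ω k (true :: s))) := by
        rw [pow_succ]
        simp [Equiv.Perm.mul_apply, sq]
      rw [h1, g_sq_true ω h, ih, pow_succ]
      simp [Equiv.Perm.mul_apply]

lemma g_sq_pow_false {k : ℕ} (h : ω k ≠ GLetter.d) (m : ℕ) (s : List Bool) :
    (((g ω k) ^ 2) ^ m) (false :: s) = false :: (((g ω (k + 1))⁻¹) ^ m) s := by
  induction m generalizing s with
  | zero => rfl
  | succ m ih =>
      have h1 : (((g ω k) ^ 2) ^ (m + 1)) (false :: s)
          = (((g ω k) ^ 2) ^ m) (g ω k (g ω k (false :: s))) := by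
        rw [pow_succ]
        simp [Equiv.Perm.mul_apply, sq]
      rw [h1, g_sq_false ω h, ih, pow_succ]
      simp [Equiv.Perm.mul_apply]

lemma main (n : ℕ) (hω : ω (n - 1) = GLetter.d) :
    ∀ j k, k < n → n - k = j → (g ω k) ^ (2 ^ (n - k + 1)) = 1 := by
  intro j
  induction j with
  | zero => intro k hk hj; omega
  | succ j ih =>
      intro k hk hj
      by_cases h : ω k = GLetter.d
      · have h4 : (g ω k) ^ 4 = 1 := g_pow4 ω h
        have he : 2 ^ (n - k + 1) = 4 * 2 ^ (n - k - 1) := by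
          have : n - k + 1 = 2 + (n - k - 1) := by omega
          rw [this, pow_add]; norm_num
        rw [he, pow_mul, h4, one_pow]
      · have hk1 : k + 1 < n := by
          rcases Nat.lt_or_ge (k + 1) n with h1 | h1
          · exact h1
          · exfalso; apply h
            have : k = n - 1 := by omega
            rw [this]; exact hω
      -- apply IH at k+1
        have hih : (g ω (k + 1)) ^ (2 ^ (n - (k + 1) + 1)) = 1 :=
          ih (k + 1) hk1 (by omega)
        have hnk : n - (k + 1) + 1 = n - k := by omega
        rw [hnk] at hih
        have he : 2 ^ (n - k + 1) = 2 * 2 ^ (n - k) := by rw [pow_succ, mul_comm]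
        rw [he, pow_mul]
        apply Equiv.ext
        intro s
        show (((g ω k) ^ 2) ^ 2 ^ (n - k)) s = s
        cases s with
        | nil =>
            have h0 : ((g ω k) ^ 2) ([] : List Bool) = [] := by
              rw [sq, Equiv.Perm.mul_apply, g_nil, g_nil]
            have : ∀ m, (((g ω k) ^ 2) ^ m) ([] : List Bool) = [] := by
              intro m
              induction m with
              | zero => rfl
              | succ m ihm => rw [pow_succ, Equiv.Perm.mul_apply, h0, ihm]
            exact this (2 ^ (n - k))
        | cons b t =>
            cases b
            · rw [g_sq_pow_false ω h, inv_pow, hih]; rfl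
            · rw [g_sq_pow_true ω h, hih]; rfl

end Stmt17Aux

/-- If `ω_{n-1} = d`, then `(a·d_k)^{2^{n-k+1}} = 1` for every `0 ≤ k < n`. -/
theorem stmt17 (ω : ℕ → GLetter) (n : ℕ) (hn : 1 ≤ n) (hω : ω (n - 1) = GLetter.d)
    (k : ℕ) (hk : k < n) :
    (aPerm * xPerm ω GLetter.d k) ^ (2 ^ (n - k + 1)) = 1 :=
  Stmt17Aux.main ω n hω (n - k) k hk rfl
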